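/- For x, y ∈ ℝ² (or ℝⁿ) with 0 < |x| < |y| and cos θ = ⟨x,y⟩/(|x||y|), one has 4 log|x-y|^{-1} = 4 log|y|^{-1} - |x|²/|y|² - 2Σ_{k=1}^∞ (|x|/|y|)^k [(|x|²/|y|²)/(k+2) - 1/k] C_k^{(1)}(cos θ). -/

import Mathlib

noncomputable def gegenbauer (v : ℝ) (k : ℕ) (z : ℝ) : ℝ :=
  ∑ l ∈ Finset.range (k / 2 + 1),
    (-1 : ℝ) ^ l * Real.Gamma ((k : ℝ) - (l : ℝ) + v) /
      (Real.Gamma v * (Nat.factorial l) * (Nat.factorial (k - 2 * l))) * (2 * z) ^ (k - 2 * l)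

/-- Chebyshev U via explicit binomial sum -/
noncomputable def gU (k : ℕ) (z : ℝ) : ℝ :=
  ∑ l ∈ Finset.range (k + 1), (-1 : ℝ) ^ l * ((k - l).choose l : ℝ) * (2 * z) ^ (k - 2 * l)

lemma gegenbauer_eq_gU (k : ℕ) (z : ℝ) : gegenbauer 1 k z = gU k z := by
  unfold gegenbauer gU
  have step1 : ∑ l ∈ Finset.range (k / 2 + 1),
      (-1 : ℝ) ^ l * Real.Gamma ((k : ℝ) - (l : ℝ) + 1) /
        (Real.Gamma 1 * (Nat.factorial l) * (Nat.factorial (k - 2 * l))) * (2 * z) ^ (k - 2 * l)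
      = ∑ l ∈ Finset.range (k / 2 + 1),
        (-1 : ℝ) ^ l * ((k - l).choose l : ℝ) * (2 * z) ^ (k - 2 * l) := by
    apply Finset.sum_congr rfl
    intro l hl
    simp only [Finset.mem_range] at hl
    have hlk : l ≤ k / 2 := by omega
    have h2l : 2 * l ≤ k := by omega
    have hcast : (k : ℝ) - (l : ℝ) + 1 = ((k - l : ℕ) : ℝ) + 1 := by
      have : l ≤ k := by omega
      push_cast [this]; ring
    rw [hcast, Real.Gamma_nat_eq_factorial, Real.Gamma_one]
    have hch : ((k - l).choose l : ℝ) * (l.factorial : ℝ) * ((k - 2 * l).factorial : ℝ)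
        = ((k - l).factorial : ℝ) := by
      have h1 : l ≤ k - l := by omega
      have := Nat.choose_mul_factorial_mul_factorial h1
      rw [show k - l - l = k - 2 * l by omega] at this
      exact_mod_cast congrArg (Nat.cast (R := ℝ)) this
    have hfl : (l.factorial : ℝ) ≠ 0 := Nat.cast_ne_zero.mpr (Nat.factorial_ne_zero l)
    have hf2 : ((k - 2 * l).factorial : ℝ) ≠ 0 := Nat.cast_ne_zero.mpr (Nat.factorial_ne_zero _)
    field_simp
    rw [← hch]; ring
  rw [step1]
  apply Finset.sum_subset (Finset.range_subset_range.mpr (by omega : k / 2 + 1 ≤ k + 1))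
  intro l hl hnl
  simp only [Finset.mem_range] at hl hnl
  have : k - l < l := by omega
  rw [Nat.choose_eq_zero_of_lt this]
  simp

lemma gU_zero (z : ℝ) : gU 0 z = 1 := by simp [gU]

lemma gU_one (z : ℝ) : gU 1 z = 2 * z := by
  simp [gU, Finset.sum_range_succ]

lemma gU_rec (k : ℕ) (z : ℝ) : gU (k + 2) z = 2 * z * gU (k + 1) z - gU k z := by
  have hL : gU (k + 2) z = (2 * z) ^ (k + 2)
      + ∑ l ∈ Finset.range (k + 1),
        ((-1 : ℝ) ^ (l + 1) * ((k - l).choose (l + 1) : ℝ) * (2 * z) ^ (k - 2 * l)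
          + (-1 : ℝ) ^ (l + 1) * ((k - l).choose l : ℝ) * (2 * z) ^ (k - 2 * l)) := by
    unfold gU
    rw [Finset.sum_range_succ (n := k + 2)]
    rw [Nat.choose_eq_zero_of_lt (by omega : k + 2 - (k + 2) < k + 2)]
    rw [Finset.sum_range_succ']
    simp only [Nat.cast_zero, mul_zero, zero_mul, add_zero, pow_zero, Nat.sub_zero,
      Nat.choose_zero_right, Nat.cast_one, one_mul, mul_one]
    rw [add_comm]
    congr 1
    apply Finset.sum_congr rfl
    intro l hl
    simp only [Finset.mem_range] at hl
    have h1 : k + 2 - (l + 1) = (k - l) + 1 := by omega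
    have h2 : k + 2 - 2 * (l + 1) = k - 2 * l := by omega
    rw [h1, h2, Nat.choose_succ_succ]
    push_cast
    ring
  have hR : 2 * z * gU (k + 1) z = (2 * z) ^ (k + 2)
      + ∑ l ∈ Finset.range (k + 1),
        (-1 : ℝ) ^ (l + 1) * ((k - l).choose (l + 1) : ℝ) * (2 * z) ^ (k - 2 * l) := by
    unfold gU
    rw [Finset.sum_range_succ']
    simp only [Nat.sub_zero, Nat.choose_zero_right, Nat.cast_one, one_mul, pow_zero, mul_one]
    rw [mul_add, add_comm]
    congr 1
    · rw [show k + 1 - 2 * 0 = k + 1 from rfl, ← pow_succ']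
    rw [Finset.mul_sum]
    apply Finset.sum_congr rfl
    intro l hl
    simp only [Finset.mem_range] at hl
    have h1 : k + 1 - (l + 1) = k - l := by omega
    rw [h1]
    by_cases hc : 2 * l + 2 ≤ k + 1
    · obtain ⟨m, hm⟩ : ∃ m, k - 2 * l = m + 1 := ⟨k - 2 * l - 1, by omega⟩
      have h2 : k + 1 - 2 * (l + 1) = m := by omega
      rw [h2, hm, pow_succ]
      ring
    · have : k - l < l + 1 := by omega
      rw [Nat.choose_eq_zero_of_lt this]
      simp
  rw [hL, hR, Finset.sum_add_distrib]
  have : ∑ l ∈ Finset.range (k + 1),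
      (-1 : ℝ) ^ (l + 1) * ((k - l).choose l : ℝ) * (2 * z) ^ (k - 2 * l) = -gU k z := by
    unfold gU
    rw [← Finset.sum_neg_distrib]
    apply Finset.sum_congr rfl
    intro l _
    rw [pow_succ]
    ring
  rw [this]
  ring

noncomputable def wC (z : ℝ) : ℂ := (z : ℂ) + (Real.sqrt (1 - z ^ 2) : ℝ) * Complex.I

noncomputable def tC (z : ℝ) (k : ℕ) : ℝ := 2 * ((wC z) ^ k).re

lemma wC_re (z : ℝ) : (wC z).re = z := by simp [wC]

lemma wC_sq {z : ℝ} (hz : z ^ 2 ≤ 1) : (wC z) ^ 2 = 2 * (z : ℂ) * wC z - 1 := by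
  have h : ((Real.sqrt (1 - z ^ 2) : ℝ) : ℂ) ^ 2 = 1 - (z : ℂ) ^ 2 := by
    rw [← Complex.ofReal_pow, Real.sq_sqrt (by linarith)]
    push_cast; ring
  unfold wC
  linear_combination (Complex.I ^ 2) * h + (1 - (z:ℂ)^2) * Complex.I_sq

lemma wC_abs {z : ℝ} (hz : z ^ 2 ≤ 1) : ‖wC z‖ = 1 := by
  rw [Complex.norm_def, Complex.normSq_apply]
  unfold wC
  simp only [Complex.add_re, Complex.ofReal_re, Complex.mul_re, Complex.I_re, Complex.I_im,
    Complex.ofReal_im, Complex.add_im, Complex.mul_im]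
  rw [show (z + (Real.sqrt (1 - z ^ 2) * 0 - 0 * 1)) = z by ring,
      show (0 + (Real.sqrt (1 - z ^ 2) * 1 + 0 * 0)) = Real.sqrt (1 - z ^ 2) by ring]
  rw [show Real.sqrt (1 - z ^ 2) * Real.sqrt (1 - z ^ 2) = Real.sqrt (1-z^2) ^ 2 by ring,
    Real.sq_sqrt (by linarith)]
  rw [show z * z + (1 - z ^ 2) = 1 by ring, Real.sqrt_one]

lemma wC_pow_rec {z : ℝ} (hz : z ^ 2 ≤ 1) (k : ℕ) :
    (wC z) ^ (k + 2) = 2 * (z : ℂ) * (wC z) ^ (k + 1) - (wC z) ^ k := by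
  have h := wC_sq hz
  calc (wC z) ^ (k + 2) = (wC z) ^ k * (wC z) ^ 2 := by ring
    _ = (wC z) ^ k * (2 * (z : ℂ) * wC z - 1) := by rw [h]
    _ = 2 * (z : ℂ) * (wC z) ^ (k + 1) - (wC z) ^ k := by ring

lemma tC_rec {z : ℝ} (hz : z ^ 2 ≤ 1) (k : ℕ) :
    tC z (k + 2) = 2 * z * tC z (k + 1) - tC z k := by
  unfold tC
  rw [wC_pow_rec hz k]
  rw [Complex.sub_re]
  rw [show (2 * (z : ℂ)) = ((2 * z : ℝ) : ℂ) by push_cast; ring, Complex.re_ofReal_mul]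
  ring

lemma tC_abs_le {z : ℝ} (hz : z ^ 2 ≤ 1) (k : ℕ) : |tC z k| ≤ 2 := by
  unfold tC
  rw [abs_mul, abs_two]
  have h1 : |((wC z) ^ k).re| ≤ ‖(wC z) ^ k‖ := Complex.abs_re_le_norm _
  rw [norm_pow, wC_abs hz, one_pow] at h1
  linarith

lemma gU_sub (z : ℝ) (hz : z ^ 2 ≤ 1) : ∀ k, gU (k + 2) z - gU k z = tC z (k + 2) := by
  have t1 : tC z 1 = 2 * z := by simp [tC, wC_re]
  have t0 : tC z 0 = 2 := by simp [tC]
  have t2 : tC z 2 = 4 * z ^ 2 - 2 := by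
    have := tC_rec hz 0; rw [this, t1, t0]; ring
  have t3 : tC z 3 = 8 * z ^ 3 - 6 * z := by
    have := tC_rec hz 1; rw [this, t2, t1]; ring
  have g2 : gU 2 z = 4 * z ^ 2 - 1 := by
    rw [gU_rec, gU_one, gU_zero]; ring
  have g3 : gU 3 z = 8 * z ^ 3 - 4 * z := by
    rw [gU_rec, g2, gU_one]; ring
  intro k
  induction k using Nat.twoStepInduction with
  | zero => rw [g2, gU_zero, t2]; ring
  | one => rw [g3, gU_one, t3]; ring
  | more n ih1 ih2 =>
    have e1 : gU (n + 4) z = 2 * z * gU (n + 3) z - gU (n + 2) z := gU_rec (n + 2) z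
    have e2 : gU (n + 2) z = 2 * z * gU (n + 1) z - gU n z := gU_rec n z
    have e3 := tC_rec hz (n + 2)
    show gU (n + 4) z - gU (n + 2) z = tC z (n + 4)
    rw [show n + 1 + 2 = n + 3 from rfl] at ih2
    rw [show n + 2 + 2 = n + 4 from rfl, show n + 2 + 1 = n + 3 from rfl] at e3
    linear_combination e1 - e2 - e3 + 2 * z * ih2 - ih1

lemma gU_abs_le (z : ℝ) (hz : z ^ 2 ≤ 1) : ∀ k, |gU k z| ≤ k + 1 := by
  intro k
  induction k using Nat.twoStepInduction with
  | zero => rw [gU_zero]; norm_num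
  | one =>
    rw [gU_one, abs_mul, abs_two]
    have : |z| ≤ 1 := abs_le_one_iff_mul_self_le_one.mpr (by nlinarith)
    push_cast; linarith
  | more n ih1 _ =>
    have h := gU_sub z hz n
    have := tC_abs_le hz (n + 2)
    have : |gU (n + 2) z| ≤ |gU n z| + |tC z (n + 2)| := by
      calc |gU (n + 2) z| = |gU n z + tC z (n + 2)| := by rw [← h]; ring_nf
        _ ≤ _ := abs_add_le _ _
    push_cast
    push_cast at ih1
    have h2 := tC_abs_le hz (n + 2)
    linarith

lemma tC_one (z : ℝ) : tC z 1 = 2 * z := by simp [tC, wC]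

set_option maxHeartbeats 1000000 in
theorem stmt12 (x y : EuclideanSpace ℝ (Fin 2)) (hx : 0 < ‖x‖) (hxy : ‖x‖ < ‖y‖) :
    4 * Real.log (‖x - y‖⁻¹) = 4 * Real.log (‖y‖⁻¹) - ‖x‖ ^ 2 / ‖y‖ ^ 2 -
      2 * ∑' k : ℕ, (‖x‖ / ‖y‖) ^ (k + 1) *
        ((‖x‖ ^ 2 / ‖y‖ ^ 2) / ((k : ℝ) + 3) - 1 / ((k : ℝ) + 1)) *
        gegenbauer 1 (k + 1) ((inner ℝ x y : ℝ) / (‖x‖ * ‖y‖)) := by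
  have hy : 0 < ‖y‖ := lt_trans hx hxy
  set z : ℝ := (inner ℝ x y : ℝ) / (‖x‖ * ‖y‖) with hzdef
  set r : ℝ := ‖x‖ / ‖y‖ with hrdef
  have hr0 : 0 < r := div_pos hx hy
  have hr1 : r < 1 := (div_lt_one hy).mpr hxy
  have hz1 : |z| ≤ 1 := by
    rw [hzdef, abs_div, abs_of_pos (by positivity : (0:ℝ) < ‖x‖ * ‖y‖)]
    rw [div_le_one (by positivity)]
    exact abs_real_inner_le_norm x y
  have hz2 : z ^ 2 ≤ 1 := by nlinarith [abs_nonneg z, sq_abs z]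
  have hzle : z ≤ 1 := (abs_le.mp hz1).2
  set Q : ℝ := 1 - 2 * r * z + r ^ 2 with hQdef
  have hQpos : 0 < Q := by nlinarith [sq_nonneg (1 - r)]
  have hr2 : ‖x‖ ^ 2 / ‖y‖ ^ 2 = r ^ 2 := (div_pow _ _ _).symm
  have hxr : ‖x‖ = r * ‖y‖ := by rw [hrdef, div_mul_cancel₀ _ hy.ne']
  have hinner : (inner ℝ x y : ℝ) = z * (‖x‖ * ‖y‖) := by
    rw [hzdef]; field_simp
  have hnorm : ‖x - y‖ ^ 2 = ‖y‖ ^ 2 * Q := by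
    rw [norm_sub_sq_real, hinner, hxr, hQdef]; ring
  -- the complex log series
  have hwabs : ‖(r : ℂ) * wC z‖ = r := by
    rw [norm_mul, wC_abs hz2, Complex.norm_real, Real.norm_eq_abs, abs_of_pos hr0, mul_one]
  have hnlt : ‖(r : ℂ) * wC z‖ < 1 := by rw [hwabs]; exact hr1
  have Hre := Complex.hasSum_re (Complex.hasSum_taylorSeries_neg_log hnlt)
  have hlogre : (-Complex.log (1 - (r : ℂ) * wC z)).re = -(Real.log Q / 2) := by
    rw [Complex.neg_re, Complex.log_re, Complex.norm_def]
    have hnsq : Complex.normSq (1 - (r : ℂ) * wC z) = Q := by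
      rw [Complex.normSq_apply]
      simp only [Complex.sub_re, Complex.sub_im, Complex.one_re, Complex.one_im,
        Complex.re_ofReal_mul, Complex.im_ofReal_mul]
      have hwre : (wC z).re = z := by simp [wC]
      have hwim : (wC z).im = Real.sqrt (1 - z ^ 2) := by simp [wC]
      rw [hwre, hwim, hQdef]
      have hs : Real.sqrt (1 - z ^ 2) ^ 2 = 1 - z ^ 2 := Real.sq_sqrt (by nlinarith)
      nlinarith [hs]
    rw [hnsq, Real.log_sqrt hQpos.le]
  rw [hlogre] at Hre
  have Ht : HasSum (fun n : ℕ => r ^ n * tC z n / n) (-Real.log Q) := by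
    have H2 := Hre.mul_left 2
    have : (fun n : ℕ => 2 * ((((r : ℂ) * wC z) ^ n / n)).re)
        = fun n : ℕ => r ^ n * tC z n / n := by
      funext n
      have hterm : (((r : ℂ) * wC z) ^ n / n) = ((r ^ n / n : ℝ) : ℂ) * (wC z) ^ n := by
        push_cast; ring
      rw [hterm, Complex.re_ofReal_mul, tC]
      ring
    rw [this] at H2
    convert H2 using 1
    · rfl
    ring
  have Ht1 : HasSum (fun k : ℕ => r ^ (k + 1) * tC z (k + 1) / ((k : ℝ) + 1)) (-Real.log Q) := by
    have := (hasSum_nat_add_iff (f := fun n : ℕ => r ^ n * tC z n / n) 1).mpr (by simpa using Ht)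
    convert this using 2 with k
    · rfl
    push_cast; ring_nf
  -- summability of the two pieces
  set a : ℕ → ℝ := fun k => r ^ (k + 1) * gU (k + 1) z / ((k : ℝ) + 1) with hadef
  set b : ℕ → ℝ := fun k => r ^ (k + 3) * gU (k + 1) z / ((k : ℝ) + 3) with hbdef
  have hgeo : Summable (fun k : ℕ => 2 * r ^ (k + 1)) := by
    have := (summable_geometric_of_lt_one hr0.le hr1).mul_left (2 * r)
    convert this using 2 with k
    · rfl
    rw [pow_succ]; ring
  have hgle : ∀ k : ℕ, |gU (k + 1) z| ≤ (k : ℝ) + 2 := by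
    intro k
    have := gU_abs_le z hz2 (k + 1)
    push_cast at this ⊢; linarith
  have hA : Summable a := by
    apply Summable.of_norm_bounded hgeo
    intro k
    have hk1 : (0:ℝ) < (k : ℝ) + 1 := by positivity
    rw [Real.norm_eq_abs, hadef]
    rw [abs_div, abs_mul, abs_pow, abs_of_pos hr0, abs_of_pos hk1]
    rw [div_le_iff₀ hk1]
    calc r ^ (k + 1) * |gU (k + 1) z| ≤ r ^ (k + 1) * ((k : ℝ) + 2) :=
          mul_le_mul_of_nonneg_left (hgle k) (pow_nonneg hr0.le _)
      _ ≤ 2 * r ^ (k + 1) * ((k : ℝ) + 1) := by nlinarith [pow_nonneg hr0.le (k + 1)]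
  have hB : Summable b := by
    apply Summable.of_norm_bounded hgeo
    intro k
    have hk3 : (0:ℝ) < (k : ℝ) + 3 := by positivity
    rw [Real.norm_eq_abs, hbdef]
    rw [abs_div, abs_mul, abs_pow, abs_of_pos hr0, abs_of_pos hk3]
    rw [div_le_iff₀ hk3]
    have h2 : r ^ (k + 3) ≤ r ^ (k + 1) :=
      pow_le_pow_of_le_one hr0.le hr1.le (by omega)
    calc r ^ (k + 3) * |gU (k + 1) z| ≤ r ^ (k + 1) * |gU (k + 1) z| :=
          mul_le_mul_of_nonneg_right h2 (abs_nonneg _)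
      _ ≤ r ^ (k + 1) * ((k : ℝ) + 2) :=
          mul_le_mul_of_nonneg_left (hgle k) (pow_nonneg hr0.le _)
      _ ≤ 2 * r ^ (k + 1) * ((k : ℝ) + 3) := by nlinarith [pow_nonneg hr0.le (k + 1)]
  set A : ℝ := ∑' k, a k with hAdef
  set B : ℝ := ∑' k, b k with hBdef
  have HA : HasSum a A := hA.hasSum
  have HB : HasSum b B := hB.hasSum
  -- the shifted sequence c
  set c : ℕ → ℝ := fun n => match n with
    | 0 => 0
    | 1 => r ^ 2 * gU 0 z / 2
    | (m + 2) => b m with hcdef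
  have HC : HasSum c (B + r ^ 2 / 2) := by
    have h2 : HasSum (fun n : ℕ => c (n + 2)) B := HB
    have := (hasSum_nat_add_iff (f := c) 2).mp h2
    have hsum : ∑ i ∈ Finset.range 2, c i = r ^ 2 / 2 := by
      rw [Finset.sum_range_succ, Finset.sum_range_one]
      show (0 : ℝ) + r ^ 2 * gU 0 z / 2 = r ^ 2 / 2
      rw [gU_zero]; ring
    rwa [hsum] at this
  -- key termwise identity
  have key : (fun k : ℕ => a k - c k) = fun k : ℕ => r ^ (k + 1) * tC z (k + 1) / ((k : ℝ) + 1) := by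
    funext k
    match k with
    | 0 =>
      simp only [hcdef, hadef]
      norm_num [gU_one, tC_one]
    | 1 =>
      simp only [hcdef, hadef]
      have h := gU_sub z hz2 0
      push_cast
      linear_combination (r ^ 2 / 2) * h
    | (m + 2) =>
      simp only [hcdef, hadef, hbdef]
      have hsub := gU_sub z hz2 (m + 1)
      rw [show m + 1 + 2 = m + 3 from rfl] at hsub
      rw [show m + 2 + 1 = m + 3 from rfl]
      push_cast
      linear_combination (r ^ (m + 3) / ((m:ℝ) + 3)) * hsub
  have Hac : HasSum (fun k => a k - c k) (A - (B + r ^ 2 / 2)) := HA.sub HC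
  rw [key] at Hac
  have hval : A - (B + r ^ 2 / 2) = -Real.log Q := Hac.unique Ht1
  -- the main sum
  have HS : HasSum (fun k : ℕ => r ^ (k + 1) *
      ((‖x‖ ^ 2 / ‖y‖ ^ 2) / ((k : ℝ) + 3) - 1 / ((k : ℝ) + 1)) * gegenbauer 1 (k + 1) z)
      (B - A) := by
    have := HB.sub HA
    convert this using 2 with k
    · rfl
    rw [gegenbauer_eq_gU, hr2, hadef, hbdef]
    have hk1 : ((k : ℝ) + 1) ≠ 0 := by positivity
    have hk3 : ((k : ℝ) + 3) ≠ 0 := by positivity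
    field_simp
    ring
  rw [HS.tsum_eq]
  have hBA : B - A = Real.log Q - r ^ 2 / 2 := by linarith
  rw [hBA, hr2]
  -- final arithmetic with logs
  have hxy0 : (0:ℝ) < ‖x - y‖ := by
    have h2 : 0 < ‖x - y‖ ^ 2 := by rw [hnorm]; positivity
    cases' (norm_nonneg (x - y)).lt_or_eq with h h
    · exact h
    · exfalso; rw [← h] at h2; simp at h2
  have hlogexp : Real.log (‖x - y‖ ^ 2) = Real.log (‖y‖ ^ 2) + Real.log Q := by
    rw [hnorm, Real.log_mul (by positivity) (ne_of_gt hQpos)]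
  rw [Real.log_pow, Real.log_pow] at hlogexp
  rw [Real.log_inv, Real.log_inv]
  push_cast at hlogexp
  linarith
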